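/- (Euler's shuffle decomposition.) For all integers a, b ≥ 2: ζ(a)·ζ(b) = Σ_{k=0}^{a−1} C(b−1+k, k) · ζ(a−k, b+k) + Σ_{k=0}^{b−1} C(a−1+k, k) · ζ(b−k, a+k), where all series involved converge (each double zeta value appearing has last entry ≥ 2) and C(m,k) denotes the binomial coefficient. -/
import Mathlib
open Finset
set_option maxHeartbeats 1600000

/-- `ζ(a) = Σ_{m=1}^∞ 1/m^a` (a convergent series of reals for `a ≥ 2`). -/
noncomputable def zetaVal (a : ℕ) : ℝ := ∑' m : ℕ+, 1 / (m : ℝ) ^ a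

/-- Double zeta value `ζ(a,b) = Σ_{0<m_1<m_2} 1/(m_1^a m_2^b)`
(a convergent series of reals for `b ≥ 2`, `a ≥ 1`). -/
noncomputable def doubleZetaVal (a b : ℕ) : ℝ :=
  ∑' p : ℕ+ × ℕ+, if p.1 < p.2 then 1 / ((p.1 : ℝ) ^ a * (p.2 : ℝ) ^ b) else 0


lemma choose_sum_shift (n m : ℕ) (u : ℕ → ℝ) :
    ∑ k ∈ range (n+1), ((m+1+k).choose k : ℝ) * u k
      = ∑ k ∈ range (n+1), ((m+k).choose k : ℝ) * u k
        + ∑ k ∈ range n, ((m+1+k).choose k : ℝ) * u (k+1) := by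
  rw [Finset.sum_range_succ' (fun k => ((m+1+k).choose k : ℝ) * u k) n,
      Finset.sum_range_succ' (fun k => ((m+k).choose k : ℝ) * u k) n]
  have h : ∀ k ∈ range n, ((m+1+(k+1)).choose (k+1) : ℝ) * u (k+1)
      = ((m+(k+1)).choose (k+1) : ℝ) * u (k+1) + ((m+1+k).choose k : ℝ) * u (k+1) := by
    intro k _
    have : (m+1+(k+1)).choose (k+1) = (m+1+k).choose k + (m+1+k).choose (k+1) := by
      rw [show m+1+(k+1) = (m+1+k)+1 by ring, Nat.choose_succ_succ]
    rw [this]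
    have : m + (k+1) = m + 1 + k := by ring
    rw [this]
    push_cast
    ring
  rw [Finset.sum_congr rfl h, Finset.sum_add_distrib]
  simp [Nat.choose_zero_right]
  ring

lemma pfrac0 (A : ℕ) (x y : ℝ) (hx : 0 < x) (hy : 0 < y) :
    1 / (x^(A+1) * y)
      = ∑ k ∈ range (A+1), 1 / (x^(A+1-k) * (x+y)^(1+k)) + 1 / (y * (x+y)^(A+1)) := by
  induction A with
  | zero =>
    have hs : x + y ≠ 0 := by positivity
    rw [Finset.sum_range_one]
    field_simp
    ring
  | succ A ih =>
    have hs : (0:ℝ) < x + y := by positivity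
    have key : 1 / (x^(A+2) * y) = (1/(x+y)) * (1/(x^(A+1)*y) + 1/x^(A+2)) := by
      field_simp
      ring
    rw [key, ih, Finset.sum_range_succ' (fun k => 1 / (x^(A+2-k) * (x+y)^(1+k))) (A+1)]
    rw [mul_add, mul_add, Finset.mul_sum]
    have e1 : ∀ k ∈ range (A+1), 1/(x+y) * (1 / (x^(A+1-k) * (x+y)^(1+k)))
        = 1 / (x^(A+2-(k+1)) * (x+y)^(1+(k+1))) := by
      intro k _
      rw [Nat.succ_sub_succ]
      rw [div_mul_div_comm, one_mul]
      congr 1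
      ring
    rw [Finset.sum_congr rfl e1]
    have : 1/(x+y) * (1/(y*(x+y)^(A+1))) = 1/(y*(x+y)^(A+2)) := by
      rw [div_mul_div_comm, one_mul]; congr 1; ring
    rw [this]
    have : 1/(x+y) * (1/x^(A+2)) = 1 / (x^(A+2-0) * (x+y)^(1+0)) := by
      rw [div_mul_div_comm, one_mul]; congr 1; simp; ring
    rw [this]
    ring

lemma pfrac : ∀ (n A B : ℕ), A + B ≤ n → ∀ x y : ℝ, 0 < x → 0 < y →
    1 / (x^(A+1) * y^(B+1))
      = ∑ k ∈ range (A+1), ((B+k).choose k : ℝ) * (1 / (x^(A+1-k) * (x+y)^(B+1+k)))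
        + ∑ k ∈ range (B+1), ((A+k).choose k : ℝ) * (1 / (y^(B+1-k) * (x+y)^(A+1+k))) := by
  intro n
  induction n with
  | zero =>
    intro A B hAB x y hx hy
    obtain ⟨rfl, rfl⟩ : A = 0 ∧ B = 0 := by omega
    rw [Finset.sum_range_one, Finset.sum_range_one]
    have hs : x + y ≠ 0 := by positivity
    norm_num
    field_simp
    ring
  | succ n ih =>
    intro A B hAB x y hx hy
    match A, B with
    | A, 0 =>
      have h0 := pfrac0 A x y hx hy
      rw [Finset.sum_range_one]
      simp only [Nat.zero_add, Nat.choose_self, Nat.cast_one, one_mul, Nat.add_zero,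
        Nat.choose_zero_right, pow_one]
      simpa using h0
    | 0, B+1 =>
      have h0 := pfrac0 (B+1) y x hy hx
      rw [add_comm y x, mul_comm (y^(B+1+1)) x] at h0
      rw [Finset.sum_range_one]
      simp only [Nat.zero_add, Nat.choose_self, Nat.cast_one, one_mul, Nat.add_zero,
        Nat.choose_zero_right, pow_one]
      rw [h0]
      rw [show B+2 = B+1+1 from rfl]
      norm_num
      ring
    | A+1, B+1 =>
      have h1 := ih A (B+1) (by omega) x y hx hy
      have h2 := ih (A+1) B (by omega) x y hx hy
      have hs : (0:ℝ) < x + y := by positivity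
      have key : 1/(x^(A+2)*y^(B+2))
          = (1/(x+y)) * (1/(x^(A+1)*y^(B+2)) + 1/(x^(A+2)*y^(B+1))) := by
        field_simp
        ring
      rw [show A+1+1 = A+2 from rfl, show B+1+1 = B+2 from rfl, key, h1, h2]
      -- expand targets via choose_sum_shift
      rw [choose_sum_shift (A+1) B (fun k => 1 / (x^(A+2-k) * (x+y)^(B+2+k))),
          choose_sum_shift (B+1) A (fun k => 1 / (y^(B+2-k) * (x+y)^(A+2+k)))]
      rw [mul_add, mul_add, mul_add, Finset.mul_sum, Finset.mul_sum, Finset.mul_sum, Finset.mul_sum]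
      have e1 : ∀ k ∈ range (A+1), 1/(x+y) * (((B+1+k).choose k : ℝ) * (1 / (x^(A+1-k) * (x+y)^(B+1+1+k))))
          = ((B+1+k).choose k : ℝ) * (1 / (x^(A+2-(k+1)) * (x+y)^(B+2+(k+1)))) := by
        intro k _
        rw [Nat.succ_sub_succ, mul_comm (1/(x+y)), mul_assoc]
        congr 1
        rw [div_mul_div_comm, one_mul]
        congr 1
        ring
      have e2 : ∀ k ∈ range (A+2), 1/(x+y) * (((B+k).choose k : ℝ) * (1 / (x^(A+2-k) * (x+y)^(B+1+k))))
          = ((B+k).choose k : ℝ) * (1 / (x^(A+2-k) * (x+y)^(B+2+k))) := by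
        intro k _
        rw [mul_comm (1/(x+y)), mul_assoc]
        congr 1
        rw [div_mul_div_comm, one_mul]
        congr 1
        ring
      have e3 : ∀ k ∈ range (B+2), 1/(x+y) * (((A+k).choose k : ℝ) * (1 / (y^(B+1+1-k) * (x+y)^(A+1+k))))
          = ((A+k).choose k : ℝ) * (1 / (y^(B+2-k) * (x+y)^(A+2+k))) := by
        intro k _
        rw [mul_comm (1/(x+y)), mul_assoc]
        congr 1
        rw [div_mul_div_comm, one_mul]
        congr 1
        ring
      have e4 : ∀ k ∈ range (B+1), 1/(x+y) * (((A+1+k).choose k : ℝ) * (1 / (y^(B+1-k) * (x+y)^(A+1+1+k))))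
          = ((A+1+k).choose k : ℝ) * (1 / (y^(B+2-(k+1)) * (x+y)^(A+2+(k+1)))) := by
        intro k _
        rw [Nat.succ_sub_succ, mul_comm (1/(x+y)), mul_assoc]
        congr 1
        rw [div_mul_div_comm, one_mul]
        congr 1
        ring
      rw [Finset.sum_congr rfl e1, Finset.sum_congr rfl e2, Finset.sum_congr rfl e3,
          Finset.sum_congr rfl e4]
      ring

lemma summable_pnat (a : ℕ) (ha : 2 ≤ a) : Summable (fun m : ℕ+ => 1 / (m:ℝ)^a) := by
  have h : Summable (fun n : ℕ => 1 / (n:ℝ)^a) := Real.summable_one_div_nat_pow.2 (by omega)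
  have hinj : Function.Injective (fun m : ℕ+ => (m:ℕ)) := fun m n h => PNat.coe_injective h
  exact h.comp_injective hinj

lemma dz_eq (c d : ℕ) :
    ∑' q : ℕ+ × ℕ+, (1:ℝ) / ((q.1:ℝ)^c * ((q.1:ℝ)+(q.2:ℝ))^d) = doubleZetaVal c d := by
  rw [doubleZetaVal]
  have hinj : Function.Injective (fun q : ℕ+ × ℕ+ => ((q.1, q.1 + q.2) : ℕ+ × ℕ+)) := by
    intro q r h
    simp only [Prod.mk.injEq] at h
    obtain ⟨h1, h2⟩ := h
    rw [h1] at h2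
    exact Prod.ext h1 (add_left_cancel h2)
  have hsupp : Function.support
      (fun p : ℕ+ × ℕ+ => if p.1 < p.2 then 1/((p.1:ℝ)^c * (p.2:ℝ)^d) else 0)
      ⊆ Set.range (fun q : ℕ+ × ℕ+ => ((q.1, q.1+q.2) : ℕ+ × ℕ+)) := by
    intro p hp
    have hlt : p.1 < p.2 := by
      by_contra h
      simp [Function.mem_support, if_neg h] at hp
    exact ⟨(p.1, p.2 - p.1), Prod.ext rfl (PNat.add_sub_of_lt hlt)⟩
  rw [← hinj.tsum_eq hsupp]
  refine tsum_congr fun q => ?_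
  have hlt : q.1 < q.1 + q.2 := PNat.lt_add_right _ _
  simp only [if_pos hlt]
  congr 2
  push_cast
  ring

lemma dz_eq2 (c d : ℕ) :
    ∑' q : ℕ+ × ℕ+, (1:ℝ) / ((q.2:ℝ)^c * ((q.1:ℝ)+(q.2:ℝ))^d) = doubleZetaVal c d := by
  rw [doubleZetaVal]
  have hinj : Function.Injective (fun q : ℕ+ × ℕ+ => ((q.2, q.1 + q.2) : ℕ+ × ℕ+)) := by
    intro q r h
    simp only [Prod.mk.injEq] at h
    obtain ⟨h1, h2⟩ := h
    rw [h1] at h2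
    exact Prod.ext (add_right_cancel h2) h1
  have hsupp : Function.support
      (fun p : ℕ+ × ℕ+ => if p.1 < p.2 then 1/((p.1:ℝ)^c * (p.2:ℝ)^d) else 0)
      ⊆ Set.range (fun q : ℕ+ × ℕ+ => ((q.2, q.1+q.2) : ℕ+ × ℕ+)) := by
    intro p hp
    have hlt : p.1 < p.2 := by
      by_contra h
      simp [Function.mem_support, if_neg h] at hp
    refine ⟨(p.2 - p.1, p.1), Prod.ext rfl ?_⟩
    show p.2 - p.1 + p.1 = p.2
    rw [add_comm]
    exact PNat.add_sub_of_lt hlt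
  rw [← hinj.tsum_eq hsupp]
  refine tsum_congr fun q => ?_
  have hlt : q.2 < q.1 + q.2 := lt_add_of_pos_left _ q.1.2
  simp only [if_pos hlt]
  congr 2
  push_cast
  ring

lemma hprod_summable (a b : ℕ) (ha : 2 ≤ a) (hb : 2 ≤ b) :
    Summable (fun q : ℕ+ × ℕ+ => (1:ℝ) / ((q.1:ℝ)^a * (q.2:ℝ)^b)) := by
  have h := Summable.mul_of_nonneg (summable_pnat a ha) (summable_pnat b hb)
    (fun m => by positivity) (fun n => by positivity)
  refine h.congr fun q => ?_
  rw [div_mul_div_comm, one_mul]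

lemma summable_F1 (a b k : ℕ) (ha : 2 ≤ a) (hb : 2 ≤ b) (hk : k < a) :
    Summable (fun q : ℕ+ × ℕ+ => (1:ℝ)/((q.1:ℝ)^(a-k) * ((q.1:ℝ)+(q.2:ℝ))^(b+k))) := by
  refine Summable.of_nonneg_of_le (fun q => by positivity) (fun q => ?_)
    (hprod_summable a b ha hb)
  have hm : (0:ℝ) < (q.1:ℝ) := by exact_mod_cast q.1.2
  have hn : (0:ℝ) < (q.2:ℝ) := by exact_mod_cast q.2.2
  refine one_div_le_one_div_of_le (by positivity) ?_
  calc (q.1:ℝ)^a * (q.2:ℝ)^b = (q.1:ℝ)^(a-k) * ((q.1:ℝ)^k * (q.2:ℝ)^b) := by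
        rw [← mul_assoc, ← pow_add, Nat.sub_add_cancel hk.le]
    _ ≤ (q.1:ℝ)^(a-k) * (((q.1:ℝ)+(q.2:ℝ))^k * ((q.1:ℝ)+(q.2:ℝ))^b) := by
        gcongr <;> linarith
    _ = (q.1:ℝ)^(a-k) * ((q.1:ℝ)+(q.2:ℝ))^(b+k) := by rw [← pow_add, add_comm k b]

lemma summable_F2 (a b k : ℕ) (ha : 2 ≤ a) (hb : 2 ≤ b) (hk : k < b) :
    Summable (fun q : ℕ+ × ℕ+ => (1:ℝ)/((q.2:ℝ)^(b-k) * ((q.1:ℝ)+(q.2:ℝ))^(a+k))) := by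
  refine Summable.of_nonneg_of_le (fun q => by positivity) (fun q => ?_)
    (hprod_summable a b ha hb)
  have hm : (0:ℝ) < (q.1:ℝ) := by exact_mod_cast q.1.2
  have hn : (0:ℝ) < (q.2:ℝ) := by exact_mod_cast q.2.2
  refine one_div_le_one_div_of_le (by positivity) ?_
  calc (q.1:ℝ)^a * (q.2:ℝ)^b = (q.2:ℝ)^(b-k) * ((q.2:ℝ)^k * (q.1:ℝ)^a) := by
        rw [show (q.2:ℝ)^b = (q.2:ℝ)^(b-k) * (q.2:ℝ)^k by
          rw [← pow_add, Nat.sub_add_cancel hk.le]]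
        ring
    _ ≤ (q.2:ℝ)^(b-k) * (((q.1:ℝ)+(q.2:ℝ))^k * ((q.1:ℝ)+(q.2:ℝ))^a) := by
        gcongr <;> linarith
    _ = (q.2:ℝ)^(b-k) * ((q.1:ℝ)+(q.2:ℝ))^(a+k) := by rw [← pow_add, add_comm k a]

/-- Euler's shuffle decomposition: for integers `a, b ≥ 2`,
`ζ(a)ζ(b) = Σ_{k=0}^{a−1} C(b−1+k,k) ζ(a−k,b+k) + Σ_{k=0}^{b−1} C(a−1+k,k) ζ(b−k,a+k)`. -/
theorem euler_shuffle (a b : ℕ) (ha : 2 ≤ a) (hb : 2 ≤ b) :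
    zetaVal a * zetaVal b =
      (∑ k ∈ Finset.range a, ((b - 1 + k).choose k : ℝ) * doubleZetaVal (a - k) (b + k)) +
        ∑ k ∈ Finset.range b, ((a - 1 + k).choose k : ℝ) * doubleZetaVal (b - k) (a + k) := by
  have hsa := summable_pnat a ha
  have hsb := summable_pnat b hb
  -- Step 1: product of zeta values as a double sum
  have hprod : Summable (fun q : ℕ+ × ℕ+ => (1 / (q.1:ℝ)^a) * (1 / (q.2:ℝ)^b)) :=
    Summable.mul_of_nonneg hsa hsb (fun m => by positivity) (fun n => by positivity)
  have step1 : zetaVal a * zetaVal b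
      = ∑' q : ℕ+ × ℕ+, (1 / (q.1:ℝ)^a) * (1 / (q.2:ℝ)^b) := by
    rw [zetaVal, zetaVal]
    exact Summable.tsum_mul_tsum hsa hsb hprod
  -- Step 2: pointwise partial fractions
  obtain ⟨A, rfl⟩ : ∃ A, a = A + 1 := ⟨a - 1, by omega⟩
  obtain ⟨B, rfl⟩ : ∃ B, b = B + 1 := ⟨b - 1, by omega⟩
  have step2 : ∀ q : ℕ+ × ℕ+, (1 / (q.1:ℝ)^(A+1)) * (1 / (q.2:ℝ)^(B+1))
      = ∑ k ∈ range (A+1), ((B+k).choose k : ℝ)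
          * (1 / ((q.1:ℝ)^(A+1-k) * ((q.1:ℝ)+(q.2:ℝ))^(B+1+k)))
        + ∑ k ∈ range (B+1), ((A+k).choose k : ℝ)
          * (1 / ((q.2:ℝ)^(B+1-k) * ((q.1:ℝ)+(q.2:ℝ))^(A+1+k))) := by
    intro q
    have hm : (0:ℝ) < (q.1:ℝ) := by exact_mod_cast q.1.2
    have hn : (0:ℝ) < (q.2:ℝ) := by exact_mod_cast q.2.2
    rw [div_mul_div_comm, one_mul]
    exact pfrac (A+B) A B le_rfl _ _ hm hn
  rw [step1, tsum_congr step2]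
  -- Step 3: split the tsum
  have hS1 : ∀ k ∈ range (A+1), Summable (fun q : ℕ+ × ℕ+ =>
      ((B+k).choose k : ℝ) * (1 / ((q.1:ℝ)^(A+1-k) * ((q.1:ℝ)+(q.2:ℝ))^(B+1+k)))) := by
    intro k hk
    exact (summable_F1 (A+1) (B+1) k ha hb (mem_range.1 hk)).mul_left _
  have hS2 : ∀ k ∈ range (B+1), Summable (fun q : ℕ+ × ℕ+ =>
      ((A+k).choose k : ℝ) * (1 / ((q.2:ℝ)^(B+1-k) * ((q.1:ℝ)+(q.2:ℝ))^(A+1+k)))) := by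
    intro k hk
    exact (summable_F2 (A+1) (B+1) k ha hb (mem_range.1 hk)).mul_left _
  rw [Summable.tsum_add (summable_sum hS1) (summable_sum hS2), Summable.tsum_finsetSum hS1, Summable.tsum_finsetSum hS2]
  congr 1
  · refine Finset.sum_congr rfl fun k hk => ?_
    rw [tsum_mul_left, dz_eq (A+1-k) (B+1+k), show B+1-1 = B from rfl]
  · refine Finset.sum_congr rfl fun k hk => ?_
    rw [tsum_mul_left, dz_eq2 (B+1-k) (A+1+k), show A+1-1 = A from rfl]
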